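/- Let B be a branch at a vertex v of a tree of spheres cover F, attached at a point a₀ ∈ S_v of local degree 1, and suppose F(B) is a branch. Then B contains no critical leaf and F : B → F(B) is a bijection. -/

import Mathlib

open scoped Classical

/-- `x` and `y` are on the same side of vertex `v` in the graph `G`
(there is a walk from `x` to `y` avoiding `v`). -/
def SameSide {V : Type*} (G : SimpleGraph V) (v x y : V) : Prop :=
  ∃ p : G.Walk x y, v ∉ p.support

/-- The branch of `s` at the vertex `v`: the connected component of `G − {v}` containing `s`. -/
def Branch {V : Type*} (G : SimpleGraph V) (v s : V) : Set V :=
  {u | ∃ p : G.Walk s u, v ∉ p.support}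

/-- The (open) annulus `]]v₁,v₂[[`, the intersection of the branches `B_{v₁}(v₂)` and
`B_{v₂}(v₁)`. -/
def Annulus {V : Type*} (G : SimpleGraph V) (v₁ v₂ : V) : Set V :=
  Branch G v₁ v₂ ∩ Branch G v₂ v₁

/-- `v` is a leaf of `G` (exactly one neighbour). -/
def IsLf {V : Type*} (G : SimpleGraph V) (v : V) : Prop := ∃! u, G.Adj v u

/-- `A` is a connected component of the subset `S` of vertices of `G`. -/
def IsCompOf {V : Type*} (G : SimpleGraph V) (A S : Set V) : Prop :=
  A ⊆ S ∧
  (∀ a ∈ A, ∀ b ∈ A, ∃ p : G.Walk a b, ∀ x ∈ p.support, x ∈ S) ∧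
  (∀ a ∈ A, ∀ u, (∃ p : G.Walk a u, ∀ x ∈ p.support, x ∈ S) → u ∈ A)

/-- A combinatorial model of a (holomorphic) cover `F : T^Y → T^Z` between trees of spheres:
a map of trees sending leaves to leaves and internal vertices to internal vertices, together
with local degrees `edeg` along edges and degrees `vdeg` of the sphere maps `f_v`, subject to
the fiber-counting condition and the local Riemann–Hurwitz relation (all critical points of
`f_v` are at attaching points of edges, since `f_v : S_v − Y_v → S_{F v} − Z_{F v}` is a
covering map). -/
structure STCover (V W : Type*) [Fintype V] [Fintype W] where
  TY : SimpleGraph V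
  TZ : SimpleGraph W
  treeY : TY.IsTree
  treeZ : TZ.IsTree
  valY : ∀ v : V, IsLf TY v ∨ (∃ a b c : V, a ≠ b ∧ b ≠ c ∧ a ≠ c ∧
    TY.Adj v a ∧ TY.Adj v b ∧ TY.Adj v c)
  F : V → W
  map_adj : ∀ {u v : V}, TY.Adj u v → TZ.Adj (F u) (F v)
  map_leaf : ∀ v : V, IsLf TY v → IsLf TZ (F v)
  map_internal : ∀ v : V, ¬ IsLf TY v → ¬ IsLf TZ (F v)
  edeg : V → V → ℕ
  edeg_pos : ∀ {u v : V}, TY.Adj u v → 1 ≤ edeg u v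
  edeg_symm : ∀ u v : V, edeg u v = edeg v u
  vdeg : V → ℕ
  vdeg_pos : ∀ v : V, 1 ≤ vdeg v
  fiber_sum : ∀ v : V, ∀ w' : W, ¬ IsLf TY v → TZ.Adj (F v) w' →
    ∑ u ∈ Finset.univ.filter (fun u => TY.Adj v u ∧ F u = w'), edeg v u = vdeg v
  RH_local : ∀ v : V, ¬ IsLf TY v →
    ∑ u ∈ Finset.univ.filter (fun u => TY.Adj v u), (edeg v u - 1) = 2 * (vdeg v - 1)
  leaf_vdeg : ∀ v u : V, IsLf TY v → TY.Adj v u → vdeg v = edeg v u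

/-- A critical leaf of a cover between trees of spheres. -/
def STCover.CritLeaf {V W : Type*} [Fintype V] [Fintype W] (C : STCover V W) (v : V) : Prop :=
  IsLf C.TY v ∧ 2 ≤ C.vdeg v

open SimpleGraph Walk

section Aux
variable {V W : Type*}

lemma internal_of_two {G : SimpleGraph V} {x a b : V} (hxa : G.Adj x a) (hxb : G.Adj x b)
    (hab : a ≠ b) : ¬ IsLf G x := by
  rintro ⟨t, -, hun⟩
  exact hab ((hun a hxa).trans (hun b hxb).symm)


lemma acyclic_contra {G : SimpleGraph W} (hG : G.IsAcyclic) {a b c : W}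
    (hab : G.Adj a b) (hca : G.Adj c a) (T : G.Walk b c) (hT : T.IsPath)
    (haT : a ∉ T.support) (hbc : b ≠ c) : False := by
  have hinner : (T.concat hca).IsPath := by
    rw [← isPath_reverse_iff, reverse_concat]
    exact IsPath.cons hT.reverse (by simpa [support_reverse] using haT)
  have hcyc : (Walk.cons hab (T.concat hca)).IsCycle := by
    rw [cons_isCycle_iff]
    refine ⟨hinner, ?_⟩
    simp only [edges_concat, List.concat_eq_append, List.mem_append]
    rintro (hmem | hmem)
    · exact haT (T.fst_mem_support_of_mem_edges hmem)
    · simp only [List.mem_singleton, Sym2.eq_iff] at hmem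
      rcases hmem with ⟨rfl, rfl⟩ | ⟨-, rfl⟩
      · exact hab.ne rfl
      · exact hbc rfl
  exact hG _ hcyc

lemma branch_disjoint {G : SimpleGraph V} (hG : G.IsAcyclic) {x u1 u2 : V}
    (h1 : G.Adj x u1) (h2 : G.Adj x u2) (h12 : u1 ≠ u2) {y : V}
    (hy1 : y ∈ Branch G x u1) (hy2 : y ∈ Branch G x u2) : False := by
  obtain ⟨q1, hq1⟩ := hy1
  obtain ⟨q2, hq2⟩ := hy2
  have hW : x ∉ (q1.append q2.reverse).support := by
    rw [support_append]
    intro hx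
    rcases List.mem_append.1 hx with hx | hx
    · exact hq1 hx
    · exact hq2 (by simpa [support_reverse] using List.mem_of_mem_tail hx)
  have hT : x ∉ (q1.append q2.reverse).toPath.1.support :=
    fun hx => hW (Walk.support_toPath_subset _ hx)
  exact acyclic_contra hG h1 h2.symm (q1.append q2.reverse).toPath.1
    (q1.append q2.reverse).toPath.2 hT h12

/-- membership in a branch from a walk-prefix -/
lemma mem_branch_of_mem_support {G : SimpleGraph V} {v s y z : V} (q : G.Walk s z)
    (hv : v ∉ q.support) (hy : y ∈ q.support) : y ∈ Branch G v s :=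
  ⟨q.takeUntil y hy, fun h => hv (q.support_takeUntil_subset hy h)⟩

variable [Fintype V] [Fintype W] (C : STCover V W)

/-- The graph homomorphism underlying `C.F`. -/
def STCover.hom : C.TY →g C.TZ := ⟨C.F, fun h => C.map_adj h⟩

@[simp] lemma STCover.hom_apply (x : V) : C.hom x = C.F x := rfl

/-- Two distinct neighbours of `x` with the same image contradict `vdeg x = 1`. -/
lemma two_nbrs_contra {x a b : V} {w' : W} (hxa : C.TY.Adj x a) (hxb : C.TY.Adj x b)
    (hab : a ≠ b) (hFa : C.F a = w') (hFb : C.F b = w') (hv1 : C.vdeg x = 1) : False := by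
  have hint : ¬ IsLf C.TY x := internal_of_two hxa hxb hab
  have hadj' : C.TZ.Adj (C.F x) w' := hFa ▸ C.map_adj hxa
  have hsum := C.fiber_sum x w' hint hadj'
  have hsub : ({a, b} : Finset V) ⊆ Finset.univ.filter (fun u => C.TY.Adj x u ∧ C.F u = w') := by
    intro u hu
    rcases Finset.mem_insert.1 hu with rfl | hu
    · simp [hxa, hFa]
    · rw [Finset.mem_singleton] at hu; subst hu; simp [hxb, hFb]
  have h2 : 2 ≤ ∑ u ∈ Finset.univ.filter (fun u => C.TY.Adj x u ∧ C.F u = w'), C.edeg x u := by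
    calc (2 : ℕ) = ∑ _u ∈ ({a, b} : Finset V), 1 := by
          rw [Finset.sum_const, Finset.card_pair hab]; rfl
      _ ≤ ∑ u ∈ ({a, b} : Finset V), C.edeg x u := by
          refine Finset.sum_le_sum ?_
          intro u hu
          rcases Finset.mem_insert.1 hu with rfl | hu
          · exact C.edeg_pos hxa
          · rw [Finset.mem_singleton] at hu; subst hu; exact C.edeg_pos hxb
      _ ≤ _ := Finset.sum_le_sum_of_subset hsub
  omega

/-- If `x` is internal with `vdeg x = 1`, every edge at `x` has local degree 1. -/
lemma edeg_all_one {x : V} (hint : ¬ IsLf C.TY x) (hv1 : C.vdeg x = 1) :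
    ∀ u, C.TY.Adj x u → C.edeg x u = 1 := by
  have hRH := C.RH_local x hint
  rw [hv1] at hRH
  intro u hu
  have h0 : C.edeg x u - 1 = 0 :=
    (Finset.sum_eq_zero_iff.1 (by omega : ∑ u ∈ Finset.univ.filter
      (fun u => C.TY.Adj x u), (C.edeg x u - 1) = 0)) u (by simp [hu])
  have := C.edeg_pos hu
  omega

/-- Surjectivity of branches: lifting paths in the target tree. -/
lemma surj_aux {x u : V} :
    ∀ (w₁ w : W) (W₁ : C.TZ.Walk w₁ w), W₁.IsPath → C.F x ∉ W₁.support →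
    ∀ w₀, C.TZ.Adj w₀ w₁ → w₀ ∉ W₁.support →
    ∀ y, y ∈ Branch C.TY x u → C.F y = w₁ →
    ∃ z ∈ Branch C.TY x u, C.F z = w := by
  intro w₁ w W₁
  induction W₁ with
  | nil =>
    intro _ _ _ _ _ y hy hFy
    exact ⟨y, hy, hFy⟩
  | @cons w₁ w₂ w h q ih =>
    intro hP hx w₀ h₀ h₀n y hy hFy
    by_cases hlf : IsLf C.TY y
    · exfalso
      obtain ⟨t, -, hun⟩ := C.map_leaf y hlf
      have e1 : w₀ = t := hun w₀ (hFy ▸ h₀.symm)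
      have e2 : w₂ = t := hun w₂ (hFy ▸ h)
      exact h₀n (by rw [e1, ← e2]; exact List.mem_cons_of_mem _ q.start_mem_support)
    · have hadj' : C.TZ.Adj (C.F y) w₂ := hFy ▸ h
      have hsum := C.fiber_sum y w₂ hlf hadj'
      have hne : (Finset.univ.filter (fun u' => C.TY.Adj y u' ∧ C.F u' = w₂)).Nonempty := by
        by_contra hemp
        rw [Finset.not_nonempty_iff_eq_empty] at hemp
        rw [hemp, Finset.sum_empty] at hsum
        have := C.vdeg_pos y
        omega
      obtain ⟨z, hz⟩ := hne
      rw [Finset.mem_filter] at hz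
      obtain ⟨-, hyz, hFz⟩ := hz
      obtain ⟨qy, hqy⟩ := hy
      have hzx : z ≠ x := by
        rintro rfl
        exact hx (by rw [hFz]; exact List.mem_cons_of_mem _ q.start_mem_support)
      have hzB : z ∈ Branch C.TY x u := by
        refine ⟨qy.concat hyz, ?_⟩
        rw [support_concat]
        simp only [List.concat_eq_append, List.mem_append, List.mem_singleton]
        rintro (hmem | rfl)
        · exact hqy hmem
        · exact hzx rfl
      exact ih hP.of_cons (fun hm => hx (List.mem_cons_of_mem _ hm)) w₁
        h ((cons_isPath_iff _ _).1 hP).2 z hzB hFz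

/-- Image of a branch contains the branch of the image. -/
lemma surj {x u : V} (hxu : C.TY.Adj x u) {w : W}
    (hw : w ∈ Branch C.TZ (C.F x) (C.F u)) :
    ∃ y ∈ Branch C.TY x u, C.F y = w := by
  obtain ⟨p, hp⟩ := hw
  have hsub := Walk.support_toPath_subset p
  exact surj_aux C (C.F u) w p.toPath.1 p.toPath.2 (fun h => hp (hsub h))
    (C.F x) (C.map_adj hxu) (fun h => hp (hsub h)) u ⟨Walk.nil, by simp [hxu.ne]⟩ rfl

lemma main_nil {v s : V} (hadj : C.TY.Adj v s) (hd1 : C.edeg v s = 1)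
    (hFv : ∀ y ∈ Branch C.TY v s, C.F y ≠ C.F v) :
    C.vdeg s = 1 ∧ (∀ u, C.TY.Adj s u → C.edeg s u = 1) ∧
      (((Walk.nil : C.TY.Walk s s).concat hadj.symm).map C.hom).IsPath := by
  have hsB : s ∈ Branch C.TY v s := ⟨Walk.nil, by simpa using hadj.ne⟩
  have hvdeg : C.vdeg s = 1 := by
    by_cases hlf : IsLf C.TY s
    · rw [C.leaf_vdeg s v hlf hadj.symm, C.edeg_symm, hd1]
    · have hsum := C.fiber_sum s (C.F v) hlf (C.map_adj hadj).symm
      have hfilt : Finset.univ.filter (fun u => C.TY.Adj s u ∧ C.F u = C.F v) = {v} := by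
        ext u
        simp only [Finset.mem_filter, Finset.mem_univ, true_and, Finset.mem_singleton]
        constructor
        · rintro ⟨hsu, hFu⟩
          by_contra huv
          have huB : u ∈ Branch C.TY v s := by
            refine ⟨Walk.cons hsu Walk.nil, ?_⟩
            simp only [support_cons, support_nil, List.mem_cons, List.mem_singleton]
            rintro (rfl | rfl | h)
            · exact hadj.ne rfl
            · exact huv rfl
            · exact List.not_mem_nil h
          exact hFv u huB hFu
        · rintro rfl; exact ⟨hadj.symm, rfl⟩
      rw [hfilt, Finset.sum_singleton, C.edeg_symm, hd1] at hsum
      exact hsum.symm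
  refine ⟨hvdeg, ?_, ?_⟩
  · intro u hu
    by_cases hlf : IsLf C.TY s
    · obtain ⟨t, -, hun⟩ := hlf
      have huv : u = v := (hun u hu).trans (hun v hadj.symm).symm
      subst huv
      rw [C.edeg_symm]; exact hd1
    · exact edeg_all_one C hlf hvdeg u hu
  · rw [Walk.concat_nil, Walk.map_cons]
    refine IsPath.cons (by simp) ?_
    simp only [Walk.map_nil, support_nil, List.mem_singleton, STCover.hom_apply]
    exact hFv s hsB

lemma main {v s : V} (hadj : C.TY.Adj v s) (hd1 : C.edeg v s = 1)
    (hFv : ∀ y ∈ Branch C.TY v s, C.F y ≠ C.F v) :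
    ∀ (n : ℕ) (x : V) (P : C.TY.Walk x s), P.length ≤ n → P.IsPath → v ∉ P.support →
      C.vdeg x = 1 ∧ (∀ u, C.TY.Adj x u → C.edeg x u = 1) ∧
      ((P.concat hadj.symm).map C.hom).IsPath := by
  intro n
  induction n with
  | zero =>
    intro x P hlen hP hv
    cases P with
    | nil => exact main_nil C hadj hd1 hFv
    | cons h P₁ => simp at hlen
  | succ n ih =>
    intro x P hlen hP hv
    cases P with
    | nil => exact main_nil C hadj hd1 hFv
    | @cons _ p _ h P₁ =>
      have hP₁ : P₁.IsPath := hP.of_cons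
      have hxP₁ : x ∉ P₁.support := ((cons_isPath_iff _ _).1 hP).2
      have hvx : v ≠ x := fun e => hv (by rw [e]; exact Walk.start_mem_support _)
      have hvP₁ : v ∉ P₁.support := fun hm => hv (List.mem_cons_of_mem _ hm)
      have hlen₁ : P₁.length ≤ n := by
        rw [Walk.length_cons] at hlen; omega
      obtain ⟨hvp, hep, hQ₁⟩ := ih p P₁ hlen₁ hP₁ hvP₁
      -- memberships in the big branch
      have hmemB : ∀ y ∈ (Walk.cons h P₁).support, y ∈ Branch C.TY v s := by
        intro y hy
        refine mem_branch_of_mem_support (Walk.cons h P₁).reverse ?_ ?_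
        · rwa [support_reverse, List.mem_reverse]
        · rwa [support_reverse, List.mem_reverse]
      have hxB : x ∈ Branch C.TY v s := hmemB x (Walk.start_mem_support _)
      have hpB : p ∈ Branch C.TY v s :=
        hmemB p (List.mem_cons_of_mem _ (Walk.start_mem_support _))
      -- Step (b): the image of x is not on the image path of p
      have hb : C.F x ∉ ((P₁.concat hadj.symm).map C.hom).support := by
        intro hmem
        cases P₁ with
        | nil =>
          rw [Walk.concat_nil, Walk.map_cons, support_cons] at hmem
          simp only [Walk.map_nil, support_nil, List.mem_cons, List.mem_singleton,
            STCover.hom_apply] at hmem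
          rcases hmem with he | he | he
          · exact (C.map_adj h).ne he
          · exact hFv x hxB he
          · exact List.not_mem_nil he
        | @cons _ g _ h₂ P₂ =>
          rw [concat_cons, Walk.map_cons] at hmem hQ₁
          have hQ₂path : ((P₂.concat hadj.symm).map C.hom).IsPath := hQ₁.of_cons
          have hFpQ₂ : C.F p ∉ ((P₂.concat hadj.symm).map C.hom).support :=
            ((cons_isPath_iff _ _).1 hQ₁).2
          rw [support_cons] at hmem
          rcases List.mem_cons.1 hmem with he | hmem2
          · exact (C.map_adj h).ne he
          · have hxg : x ≠ g := by
              intro e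
              exact hxP₁ (by rw [e]; exact List.mem_cons_of_mem _ (Walk.start_mem_support _))
            by_cases hg : C.F x = C.F g
            · exact two_nbrs_contra C h.symm h₂ hxg hg rfl hvp
            · exact acyclic_contra C.treeZ.IsAcyclic (C.map_adj h₂) (C.map_adj h)
                (((P₂.concat hadj.symm).map C.hom).takeUntil _ hmem2)
                (hQ₂path.takeUntil _)
                (fun hm => hFpQ₂ (Walk.support_takeUntil_subset _ _ hm))
                (fun e => hg e.symm)
      -- Step (c): no folding at x
      have hc : ∀ u, C.TY.Adj x u → u ≠ p → C.F u ≠ C.F p := by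
        intro u hxu hup hFu
        have huv : u ≠ v := by
          rintro rfl
          exact hFv p hpB hFu.symm
        have hvBxp : v ∈ Branch C.TY x p := by
          refine ⟨P₁.concat hadj.symm, ?_⟩
          rw [support_concat]
          simp only [List.concat_eq_append, List.mem_append, List.mem_singleton]
          rintro (hm | rfl)
          · exact hxP₁ hm
          · exact hvx rfl
        have hvBxu : v ∉ Branch C.TY x u := fun hmem =>
          branch_disjoint C.treeY.IsAcyclic h hxu (Ne.symm hup) hvBxp hmem
        have hsubB : Branch C.TY x u ⊆ Branch C.TY v s := by
          rintro y ⟨q, hq⟩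
          have hvq : v ∉ q.support := fun hm => hvBxu (mem_branch_of_mem_support q hq hm)
          obtain ⟨r, hr⟩ := hxB
          refine ⟨r.append (Walk.cons hxu q), ?_⟩
          rw [support_append]
          intro hm
          rcases List.mem_append.1 hm with hm | hm
          · exact hr hm
          · rw [support_cons, List.tail_cons] at hm
            exact hvq hm
        have hFvmem : C.F v ∈ Branch C.TZ (C.F x) (C.F u) := by
          rw [hFu]
          exact ⟨(P₁.concat hadj.symm).map C.hom, hb⟩
        obtain ⟨y, hyB, hFy⟩ := surj C hxu hFvmem
        exact hFv y (hsubB hyB) hFy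
      -- (d): vdeg x = 1
      have hd : C.vdeg x = 1 := by
        by_cases hlf : IsLf C.TY x
        · rw [C.leaf_vdeg x p hlf h, C.edeg_symm]
          exact hep x h.symm
        · have hsum := C.fiber_sum x (C.F p) hlf (C.map_adj h)
          have hfilt : Finset.univ.filter (fun u => C.TY.Adj x u ∧ C.F u = C.F p) = {p} := by
            ext u
            simp only [Finset.mem_filter, Finset.mem_univ, true_and, Finset.mem_singleton]
            constructor
            · rintro ⟨hxu, hFu⟩
              by_contra hup
              exact hc u hxu hup hFu
            · rintro rfl; exact ⟨h, rfl⟩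
          rw [hfilt, Finset.sum_singleton, C.edeg_symm] at hsum
          rw [← hsum]
          exact hep x h.symm
      -- (e): all edges at x have degree 1
      have he : ∀ u, C.TY.Adj x u → C.edeg x u = 1 := by
        by_cases hlf : IsLf C.TY x
        · intro u hu
          obtain ⟨t, -, hun⟩ := hlf
          have hup : u = p := (hun u hu).trans (hun p h).symm
          subst hup
          rw [C.edeg_symm]
          exact hep x h.symm
        · exact edeg_all_one C hlf hd
      refine ⟨hd, he, ?_⟩
      rw [concat_cons, Walk.map_cons]
      exact IsPath.cons hQ₁ hb

lemma inj_map {v s : V} (hdeg : ∀ y ∈ Branch C.TY v s, C.vdeg y = 1) :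
    ∀ {a b : V} (R : C.TY.Walk a b), R.IsPath →
      (∀ y ∈ R.support, y ∈ Branch C.TY v s) → (R.map C.hom).IsPath := by
  intro a b R
  induction R with
  | nil => intro _ _; simp
  | @cons a c b h R' ihR =>
    intro hP hsup
    rw [Walk.map_cons]
    have hR' : (R'.map C.hom).IsPath :=
      ihR hP.of_cons (fun y hy => hsup y (List.mem_cons_of_mem _ hy))
    refine IsPath.cons hR' ?_
    intro hmem
    cases R' with
    | nil =>
      simp only [Walk.map_nil, support_nil, List.mem_singleton, STCover.hom_apply] at hmem
      exact (C.map_adj h).ne hmem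
    | @cons c d b h₂ R'' =>
      rw [Walk.map_cons] at hmem hR'
      rw [support_cons] at hmem
      rcases List.mem_cons.1 hmem with he | hmem2
      · exact (C.map_adj h).ne he
      · by_cases hfd : C.F a = C.F d
        · have had : a ≠ d := by
            intro e
            refine ((cons_isPath_iff _ _).1 hP).2 ?_
            rw [e]
            exact List.mem_cons_of_mem _ (Walk.start_mem_support _)
          exact two_nbrs_contra C h.symm h₂ had hfd rfl
            (hdeg c (hsup c (List.mem_cons_of_mem _ (Walk.start_mem_support _))))
        · have hQ'' : (R''.map C.hom).IsPath := hR'.of_cons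
          have hFc : C.F c ∉ (R''.map C.hom).support := ((cons_isPath_iff _ _).1 hR').2
          exact acyclic_contra C.treeZ.IsAcyclic (C.map_adj h₂) (C.map_adj h)
            ((R''.map C.hom).takeUntil _ hmem2) (hQ''.takeUntil _)
            (fun hm => hFc (Walk.support_takeUntil_subset _ _ hm))
            (fun e => hfd e.symm)

end Aux

/-- if a branch `B` at `v`, attached at a point of local degree `1`, maps to a
branch of `T^Z`, then `B` contains no critical leaf and `F : B → F(B)` is a bijection. -/
theorem stmt12 {V W : Type*} [Fintype V] [Fintype W] (C : STCover V W)
    (v s : V) (hadj : C.TY.Adj v s)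
    (hd1 : C.edeg v s = 1)
    (hbr : ∃ s' : W, C.F '' Branch C.TY v s = Branch C.TZ (C.F v) s') :
    (∀ u ∈ Branch C.TY v s, ¬ C.CritLeaf u) ∧
    Set.InjOn C.F (Branch C.TY v s) := by
  obtain ⟨s', hs'⟩ := hbr
  have hFv : ∀ y ∈ Branch C.TY v s, C.F y ≠ C.F v := by
    intro y hy he
    have hmem : C.F y ∈ Branch C.TZ (C.F v) s' := hs' ▸ Set.mem_image_of_mem _ hy
    rw [he] at hmem
    obtain ⟨q, hq⟩ := hmem
    exact hq q.end_mem_support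
  have hmain := main C hadj hd1 hFv
  have hdeg : ∀ y ∈ Branch C.TY v s, C.vdeg y = 1 := by
    rintro y ⟨q, hq⟩
    have hrev : v ∉ q.reverse.support := by rwa [SimpleGraph.Walk.support_reverse, List.mem_reverse]
    have hvR : v ∉ q.reverse.toPath.1.support :=
      fun hm => hrev (SimpleGraph.Walk.support_toPath_subset _ hm)
    exact (hmain q.reverse.toPath.1.length y q.reverse.toPath.1 le_rfl q.reverse.toPath.2 hvR).1
  constructor
  · rintro u hu ⟨hlf, h2⟩
    rw [hdeg u hu] at h2
    omega
  · rintro a ⟨qa, hqa⟩ b ⟨qb, hqb⟩ hFab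
    have haB : a ∈ Branch C.TY v s := ⟨qa, hqa⟩
    have hbB : b ∈ Branch C.TY v s := ⟨qb, hqb⟩
    have hW : v ∉ (qa.reverse.append qb).support := by
      rw [SimpleGraph.Walk.support_append]
      intro hm
      rcases List.mem_append.1 hm with hm | hm
      · exact hqa (by simpa [SimpleGraph.Walk.support_reverse] using hm)
      · exact hqb (List.mem_of_mem_tail hm)
    have hsubR : ∀ y ∈ (qa.reverse.append qb).toPath.1.support, y ∈ Branch C.TY v s := by
      intro y hy
      have hy' := SimpleGraph.Walk.support_toPath_subset _ hy
      rcases (SimpleGraph.Walk.mem_support_append_iff _ _).1 hy' with hm | hm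
      · exact mem_branch_of_mem_support qa hqa
          (by simpa [SimpleGraph.Walk.support_reverse] using hm)
      · exact mem_branch_of_mem_support qb hqb hm
    have hmap := inj_map C hdeg (qa.reverse.append qb).toPath.1
      (qa.reverse.append qb).toPath.2 hsubR
    have hnodup := hmap.support_nodup
    rw [SimpleGraph.Walk.support_map] at hnodup
    exact List.inj_on_of_nodup_map hnodup
      ((qa.reverse.append qb).toPath.1.start_mem_support)
      ((qa.reverse.append qb).toPath.1.end_mem_support) hFab
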